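/- Hat-shift lemma for the encoding of MBR into mbr: with Y_j = Bool × (List X → (ℕ → X)), the coding (·)^[s] : (ℕ → Y) → (ℕ → X) defined by α^[s](i) = g(s ++ first n values of α^[s]) (i - n) if n ≤ i is greatest with α(n) = (true, g), and 0 if α(k) = (false, _) for all k ≤ i, and q^[s](α) = q(α^[s]), and x̂ = (true, fun _ => x :: zero-sequence), satisfies (q^[s])_{x̂} = (q_x)^[s ++ [x]], i.e., (hat x :: α)^[s] = x :: α^[s++[x]] pointwise, hence applying q. -/

import Mathlib

/-- Prepend an element to an infinite sequence. -/
def seqCons {X : Type*} (x : X) (α : ℕ → X) : ℕ → X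
  | 0 => x
  | n + 1 => α n

/-- Overwrite the initial segment of an infinite sequence with a finite list. -/
def listApp {X : Type*} (s : List X) (α : ℕ → X) : ℕ → X :=
  fun i => if h : i < s.length then s.get ⟨i, h⟩ else α (i - s.length)

/-- The list of the first `n` values of an infinite sequence. -/
def firstN {X : Type*} (α : ℕ → X) (n : ℕ) : List X := (List.range n).map α

/-- The tagged value `x̂`. -/
def hatv {X : Type*} (z : X) (x : X) : Bool × (List X → ℕ → X) :=
  (true, fun _ => seqCons x (fun _ => z))

/-- The decoding `α^[s]` of a sequence of tagged skewed values. -/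
def decode {X : Type*} (z : X) (α : ℕ → Bool × (List X → ℕ → X)) (s : List X) : ℕ → X
  | i =>
    let n := Nat.findGreatest (fun n => (α n).1 = true) i
    if (α n).1 = true then
      (α n).2 (s ++ List.ofFn (fun j : Fin n => decode z α s j)) (i - n)
    else z
  termination_by i => i
  decreasing_by exact lt_of_lt_of_le j.isLt (Nat.findGreatest_le i)



lemma fg_zero' (P : ℕ → Prop) [DecidablePred P] {i : ℕ}
    (h : ∀ k ≤ i, ¬ P (k+1)) : Nat.findGreatest P (i+1) = 0 := by
  rw [Nat.findGreatest_eq_zero_iff]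
  intro n hn hni
  match n, hn with
  | k+1, _ => exact h k (Nat.succ_le_succ_iff.mp hni)

lemma fg_succ' (P : ℕ → Prop) [DecidablePred P] {i k : ℕ} (hk : k ≤ i) (hpk : P (k+1)) :
    Nat.findGreatest P (i+1) = Nat.findGreatest (fun n => P (n+1)) i + 1 := by
  rw [Nat.findGreatest_eq_iff]
  have hle : Nat.findGreatest (fun n => P (n+1)) i ≤ i := Nat.findGreatest_le i
  have hspec : P (Nat.findGreatest (fun n => P (n+1)) i + 1) :=
    Nat.findGreatest_spec (P := fun n => P (n+1)) hk hpk
  refine ⟨Nat.succ_le_succ hle, fun _ => hspec, fun n hlt hle' hp => ?_⟩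
  match n, hlt with
  | m+1, hlt =>
    exact Nat.findGreatest_is_greatest (P := fun n => P (n+1))
      (Nat.lt_of_succ_lt_succ hlt) (Nat.succ_le_succ_iff.mp hle') hp

lemma decode_hat_shift {X : Type*} (z : X) (s : List X) (x : X)
    (β : ℕ → Bool × (List X → ℕ → X)) (i : ℕ) :
    decode z (seqCons (hatv z x) β) s i = seqCons x (decode z β (s ++ [x])) i := by
  induction i using Nat.strong_induction_on with
  | _ i ih =>
    match i with
    | 0 =>
      rw [decode, Nat.findGreatest_zero]
      simp [hatv, seqCons]
    | i + 1 =>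
      rw [decode]
      by_cases h : ∃ k ≤ i, ((β k).1 = true)
      · obtain ⟨k, hk, hpk⟩ := h
        have hfg : Nat.findGreatest (fun n => ((seqCons (hatv z x) β) n).1 = true) (i+1)
            = Nat.findGreatest (fun n => ((β n).1 = true)) i + 1 :=
          fg_succ' _ hk (by simpa [seqCons] using hpk)
        set n' := Nat.findGreatest (fun n => ((β n).1 = true)) i with hn'
        have hn'le : n' ≤ i := Nat.findGreatest_le i
        have hβn' : (β n').1 = true := Nat.findGreatest_spec (P := fun n => (β n).1 = true) hk hpk
        rw [hfg]
        simp only [seqCons, hβn', if_pos]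
        -- now RHS
        conv_rhs => rw [decode]
        simp only [← hn', hβn', if_pos]
        have h0 : decode z (seqCons (hatv z x) β) s 0 = x := by
          have := ih 0 (Nat.succ_pos i); simpa [seqCons] using this
        have hfun : (List.ofFn fun j : Fin n' => decode z (seqCons (hatv z x) β) s (j.val+1))
            = List.ofFn fun j : Fin n' => decode z β (s ++ [x]) j.val := by
          congr 1
          funext j
          have := ih (j.val+1) (Nat.succ_lt_succ (lt_of_lt_of_le j.isLt hn'le))
          simpa [seqCons] using this
        have harg : i + 1 - (n' + 1) = i - n' := by omega
        rw [List.ofFn_succ]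
        simp only [Fin.val_zero, h0, Fin.val_succ, hfun, Fin.coe_cast, List.append_assoc,
          List.singleton_append, harg]
      · push_neg at h
        have hfg : Nat.findGreatest (fun n => ((seqCons (hatv z x) β) n).1 = true) (i+1) = 0 :=
          fg_zero' _ (fun k hk => by simpa [seqCons] using h k hk)
        rw [hfg]
        simp only [seqCons, hatv]
        conv_rhs => rw [decode]
        have : (β (Nat.findGreatest (fun n => (β n).1 = true) i)).1 = false := by
          have := h _ (Nat.findGreatest_le (P := fun n => (β n).1 = true) i)
          simpa using this
        simp [this]


theorem stmt15 {X R : Type*} (z : X) (s : List X) (x : X) :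
    (∀ β : ℕ → Bool × (List X → ℕ → X),
        decode z (seqCons (hatv z x) β) s = seqCons x (decode z β (s ++ [x]))) ∧
    (∀ (q : (ℕ → X) → R) (β : ℕ → Bool × (List X → ℕ → X)),
        q (decode z (seqCons (hatv z x) β) s) = q (seqCons x (decode z β (s ++ [x])))) := by
  have key : ∀ β : ℕ → Bool × (List X → ℕ → X),
      decode z (seqCons (hatv z x) β) s = seqCons x (decode z β (s ++ [x])) :=
    fun β => funext fun i => decode_hat_shift z s x β i
  exact ⟨key, fun q β => by rw [key β]⟩
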